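/- Let G_n be the graph obtained from a cycle of length n by replacing each edge by n parallel edges (the 'fat cycle'). The branch-depth of the graphic matroid M(G_n) equals 2 for all n ≥ 3. -/

import Mathlib

/-- The rank of a set in a matroid: the largest cardinality of an
independent subset. -/
noncomputable def mrank {α : Type*} (M : Matroid α) (X : Set α) : ℕ :=
  sSup {n : ℕ | ∃ I, I ⊆ X ∧ M.Indep I ∧ I.ncard = n}

/-- The two-parameter connectivity function λ_M(X, Y) = r(X) + r(Y) - r(X ∪ Y). -/
noncomputable def mlambda {α : Type*} (M : Matroid α) (X Y : Set α) : ℤ :=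
  (mrank M X : ℤ) + mrank M Y - mrank M (X ∪ Y)

/-- `a` and `b` are both different from `v` and connected in the graph `G - v`. -/
def offRel {V : Type*} (G : SimpleGraph V) (v a b : V) : Prop :=
  ∃ (ha : a ≠ v) (hb : b ≠ v),
    (G.comap (Subtype.val : {x : V // x ≠ v} → V)).Reachable ⟨a, ha⟩ ⟨b, hb⟩

/-- `S` is a union of connected components of the graph `G - v`. -/
def UnionOfParts {V : Type*} (G : SimpleGraph V) (v : V) (S : Set V) : Prop :=
  v ∉ S ∧ ∀ a ∈ S, ∀ b, offRel G v a b → b ∈ S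

/-- A vertex with at most one neighbour. -/
def IsLeaf {V : Type*} (G : SimpleGraph V) (v : V) : Prop :=
  ∀ u w, G.Adj v u → G.Adj v w → u = w

/-- A `(d,r)`-decomposition of a matroid `M`: a tree of radius `d` whose leaves are
bijectively labelled by the elements of `M` such that for every inner vertex `v` and
every union `S` of components of `T - v`, the connectivity of the set of elements
labelling leaves in `S` is at most `r` (this is equivalent to `λ*` of the partition
given by the components of `T - v` being at most `r`). -/
structure Decomp {α : Type*} (M : Matroid α) (d r : ℕ) where
  V : Type
  fin : Fintype V
  G : SimpleGraph V
  tree : G.IsTree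
  center : V
  radius_le : ∀ v, G.dist center v ≤ d
  radius_ge : ∀ w : V, ∃ v, d ≤ G.dist w v
  label : V → α
  label_mem : ∀ v, IsLeaf G v → label v ∈ M.E
  label_inj : ∀ v w, IsLeaf G v → IsLeaf G w → label v = label w → v = w
  label_surj : ∀ e ∈ M.E, ∃ v, IsLeaf G v ∧ label v = e
  conn : ∀ v, ¬ IsLeaf G v → ∀ S : Set V, UnionOfParts G v S →
    mlambda M (label '' {u ∈ S | IsLeaf G u})
      (M.E \ label '' {u ∈ S | IsLeaf G u}) ≤ r

/-- `bd(M) ≤ k`: the matroid `M` admits a `(d,r)`-decomposition with `d ≤ k`, `r ≤ k`. -/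
def HasBranchDepthLE {α : Type*} (M : Matroid α) (k : ℕ) : Prop :=
  ∃ d r, d ≤ k ∧ r ≤ k ∧ Nonempty (Decomp M d r)


/-- The independence condition of the graphic matroid of the fat cycle `G_n`:
the ground set consists of pairs `(i, j)` where `(i, j)` is the `j`-th parallel edge
between the `i`-th and `(i+1)`-st vertices of a cycle of length `n`. A set of edges is
acyclic iff it contains at most one edge of each parallel class and does not contain
an edge from every parallel class. -/
def FatCycleIndep (n : ℕ) (S : Set (Fin n × Fin n)) : Prop :=
  (∀ i j j', (i, j) ∈ S → (i, j') ∈ S → j = j') ∧ ¬ (∀ i, ∃ j, (i, j) ∈ S)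

/- ======================= auxiliary lemmas ======================= -/

open SimpleGraph

section GenericGraph

lemma reach_invariant {V β : Type*} {G : SimpleGraph V} (f : V → β)
    (hf : ∀ a b, G.Adj a b → f a = f b) {a b : V} (h : G.Reachable a b) : f a = f b := by
  obtain ⟨w⟩ := h
  induction w with
  | nil => rfl
  | cons h p ih => exact (hf _ _ h).trans ih

lemma exists_last_edge {V : Type*} {G : SimpleGraph V} :
    ∀ {a b : V} (q : G.Walk a b), 0 < q.length →
      ∃ y, G.Adj y b ∧ y ∈ q.support ∧ s(y, b) ∈ q.edges := by
  intro a b q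
  induction q with
  | nil => simp
  | @cons a c b h q ih =>
    intro _
    cases q with
    | nil => exact ⟨a, h, by simp, by simp⟩
    | @cons c d b h' q' =>
      obtain ⟨y, hy1, hy2, hy3⟩ := ih (by simp)
      exact ⟨y, hy1, by simp [Walk.mem_support_iff] at hy2 ⊢; tauto,
        by rw [Walk.edges_cons]; exact List.mem_cons_of_mem _ hy3⟩

lemma acyclic_of_parent {V : Type*} [Fintype V] {G : SimpleGraph V} (par : V → V) (ht : V → ℕ)
    (h : ∀ a b, G.Adj a b → (b = par a ∧ ht b < ht a) ∨ (a = par b ∧ ht a < ht b)) :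
    G.IsAcyclic := by
  intro v c hc
  classical
  obtain ⟨u, hu, hmax⟩ := Finset.exists_max_image c.support.toFinset ht
    ⟨v, by simp [Walk.start_mem_support]⟩
  rw [List.mem_toFinset] at hu
  set c' := c.rotate u hu with hc'def
  have hc' : c'.IsCycle := hc.rotate hu
  have hmem : ∀ x, x ∈ c'.support → ht x ≤ ht u := by
    intro x hx
    rcases (Walk.mem_support_iff c').mp hx with h1 | h1
    · exact h1 ▸ le_rfl
    · have : x ∈ c.support.tail := (Walk.support_rotate c u hu).mem_iff.mp h1
      exact hmax x (List.mem_toFinset.mpr (List.mem_of_mem_tail this))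
  have hlen : 3 ≤ c'.length := hc'.three_le_length
  cases hq : c' with
  | nil => rw [hq] at hlen; simp at hlen
  | cons hadj q =>
    rename_i b
    rw [hq] at hlen hmem hc'
    have hb : b = par u := by
      rcases h _ _ hadj with ⟨h1, _⟩ | ⟨_, h2⟩
      · exact h1
      · exact absurd (hmem b (by simp)) (not_le.mpr h2)
    obtain ⟨y, hy1, hy2, hy3⟩ := exists_last_edge q (by simp at hlen ⊢; omega)
    have hyp : y = par u := by
      rcases h _ _ hy1.symm with ⟨h1, _⟩ | ⟨_, h2⟩
      · exact h1
      · exact absurd (hmem y (by simp [hy2])) (not_le.mpr h2)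
    have hnd := hc'.edges_nodup
    simp only [Walk.edges_cons, List.nodup_cons] at hnd
    have hyb : y = b := hyp.trans hb.symm
    subst hyb
    exact hnd.1 (by rwa [Sym2.eq_swap] at hy3)

end GenericGraph

section Ranks
variable {n : ℕ} {M : Matroid (Fin n × Fin n)}
  (hIndep : ∀ S, M.Indep S ↔ FatCycleIndep n S)

lemma ncard_compl_singleton (i : Fin n) : ({i}ᶜ : Set (Fin n)).ncard = n - 1 := by
  have h := Set.ncard_add_ncard_compl ({i} : Set (Fin n))
  rw [Set.ncard_singleton, Nat.card_eq_fintype_card, Fintype.card_fin] at h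
  omega

include hIndep in
lemma indep_ncard_le_image {I X : Set (Fin n × Fin n)} (hI : M.Indep I) (hIX : I ⊆ X) :
    I.ncard ≤ (Prod.fst '' X).ncard := by
  obtain ⟨h1, _⟩ := (hIndep I).mp hI
  have hinj : Set.InjOn Prod.fst I := by
    rintro ⟨i, j⟩ hij ⟨i', j'⟩ hij' h
    simp only at h
    subst h
    exact Prod.ext rfl (h1 i j j' hij hij')
  calc I.ncard = (Prod.fst '' I).ncard := (Set.ncard_image_of_injOn hinj).symm
    _ ≤ _ := Set.ncard_le_ncard (Set.image_mono hIX) (Set.toFinite _)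

include hIndep in
lemma indep_ncard_le {I : Set (Fin n × Fin n)} (hI : M.Indep I) : I.ncard ≤ n - 1 := by
  obtain ⟨h1, h2⟩ := (hIndep I).mp hI
  push_neg at h2
  obtain ⟨i₀, hi₀⟩ := h2
  have hsub : Prod.fst '' I ⊆ {i₀}ᶜ := by
    rintro x ⟨⟨i, j⟩, hij, rfl⟩
    simp only [Set.mem_compl_iff, Set.mem_singleton_iff]
    rintro rfl
    exact hi₀ j hij
  calc I.ncard ≤ (Prod.fst '' I).ncard := indep_ncard_le_image hIndep hI subset_rfl
    _ ≤ ({i₀}ᶜ : Set (Fin n)).ncard := Set.ncard_le_ncard hsub (Set.toFinite _)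
    _ = n - 1 := ncard_compl_singleton i₀

lemma mrank_le_of {X : Set (Fin n × Fin n)} {k : ℕ}
    (h : ∀ I, I ⊆ X → M.Indep I → I.ncard ≤ k) : mrank M X ≤ k := by
  unfold mrank
  have hne : {m : ℕ | ∃ I, I ⊆ X ∧ M.Indep I ∧ I.ncard = m}.Nonempty :=
    ⟨0, ∅, Set.empty_subset _, M.empty_indep, by simp⟩
  apply csSup_le hne
  rintro m ⟨I, hIX, hI, rfl⟩
  exact h I hIX hI

include hIndep in
lemma le_mrank {I X : Set (Fin n × Fin n)} (hIX : I ⊆ X) (hI : M.Indep I) :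
    I.ncard ≤ mrank M X := by
  unfold mrank
  have hbdd : BddAbove {m : ℕ | ∃ J, J ⊆ X ∧ M.Indep J ∧ J.ncard = m} := by
    refine ⟨n - 1, ?_⟩
    rintro m ⟨J, _, hJ, rfl⟩
    exact indep_ncard_le hIndep hJ
  exact le_csSup hbdd ⟨I, hIX, hI, rfl⟩

include hIndep in
lemma mrank_le_image_ncard {X : Set (Fin n × Fin n)} :
    mrank M X ≤ (Prod.fst '' X).ncard :=
  mrank_le_of fun _ hIX hI => indep_ncard_le_image hIndep hI hIX

include hIndep in
lemma mrank_le_n_sub_one (X : Set (Fin n × Fin n)) : mrank M X ≤ n - 1 :=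
  mrank_le_of fun _ _ hI => indep_ncard_le hIndep hI

include hIndep in
lemma diag_indep (i₀ c : Fin n) :
    M.Indep ((fun i => (i, c)) '' {i | i ≠ i₀}) ∧
      ((fun i => (i, c)) '' {i : Fin n | i ≠ i₀}).ncard = n - 1 := by
  constructor
  · rw [hIndep]
    constructor
    · rintro i j j' hj hj'
      obtain ⟨a, _, ha⟩ := hj
      obtain ⟨b, _, hb⟩ := hj'
      rw [Prod.mk.injEq] at ha hb
      rw [← ha.2, ← hb.2]
    · intro h
      obtain ⟨j, a, ha, haj⟩ := h i₀
      rw [Prod.mk.injEq] at haj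
      exact ha haj.1
  · rw [Set.ncard_image_of_injective _ (fun a b hab => (Prod.mk.injEq .. ▸ hab).1)]
    have : {i : Fin n | i ≠ i₀} = ({i₀}ᶜ : Set (Fin n)) := rfl
    rw [this, ncard_compl_singleton]

include hIndep in
lemma mrank_univ_eq (hn : 3 ≤ n) : mrank M Set.univ = n - 1 := by
  refine le_antisymm (mrank_le_n_sub_one hIndep _) ?_
  obtain ⟨hi, hc⟩ := diag_indep hIndep ⟨0, by omega⟩ ⟨0, by omega⟩
  exact hc ▸ le_mrank hIndep (Set.subset_univ _) hi

include hIndep in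
lemma mlambda_le_one (hn : 3 ≤ n) {X : Set (Fin n × Fin n)} {a b : ℕ}
    (hA : mrank M X ≤ a) (hB : mrank M (Set.univ \ X) ≤ b) (hab : a + b ≤ n) :
    mlambda M X (Set.univ \ X) ≤ 1 := by
  unfold mlambda
  rw [Set.union_diff_self, Set.union_univ, mrank_univ_eq hIndep hn]
  have h1 : (mrank M X : ℤ) ≤ a := by exact_mod_cast hA
  have h2 : (mrank M (Set.univ \ X) : ℤ) ≤ b := by exact_mod_cast hB
  have h3 : ((n - 1 : ℕ) : ℤ) = (n : ℤ) - 1 := by omega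
  omega

include hIndep in
lemma mlambda_ge (hn : 3 ≤ n) {X : Set (Fin n × Fin n)} {a b : ℕ}
    (hA : a ≤ mrank M X) (hB : b ≤ mrank M (Set.univ \ X)) :
    (a : ℤ) + b - (n - 1) ≤ mlambda M X (Set.univ \ X) := by
  unfold mlambda
  rw [Set.union_diff_self, Set.union_univ, mrank_univ_eq hIndep hn]
  have h1 : (a : ℤ) ≤ mrank M X := by exact_mod_cast hA
  have h2 : (b : ℤ) ≤ mrank M (Set.univ \ X) := by exact_mod_cast hB
  have h3 : ((n - 1 : ℕ) : ℤ) = (n : ℤ) - 1 := by omega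
  omega

end Ranks

/- ======================= the fat tree ======================= -/

abbrev FV (n : ℕ) := Option (Fin n × Option (Fin n))

def fpar {n : ℕ} : FV n → FV n
  | none => none
  | some (_, none) => none
  | some (i, some _) => some (i, none)

def fht {n : ℕ} : FV n → ℕ
  | none => 0
  | some (_, none) => 1
  | some (_, some _) => 2

def fatTree (n : ℕ) : SimpleGraph (FV n) where
  Adj a b := (fpar a = b ∨ fpar b = a) ∧ a ≠ b
  symm := ⟨by rintro a b ⟨h1 | h1, h2⟩ <;> exact ⟨by tauto, h2.symm⟩⟩
  loopless := ⟨fun a h => h.2 rfl⟩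

lemma fatTree_adj {n : ℕ} {a b : FV n} :
    (fatTree n).Adj a b ↔ (fpar a = b ∨ fpar b = a) ∧ a ≠ b := Iff.rfl

lemma fpar_lt {n : ℕ} {a b : FV n} (h : fpar a = b) (hne : a ≠ b) : fht b < fht a := by
  subst h
  match a with
  | none => simp [fpar] at hne
  | some (i, none) => simp [fpar, fht]
  | some (i, some j) => simp [fpar, fht]

lemma fpar_ne {n : ℕ} (a : FV n) (h : a ≠ none) : a ≠ fpar a := by
  match a with
  | none => exact absurd rfl h
  | some (i, none) => simp [fpar]
  | some (i, some j) => simp [fpar]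

lemma fatTree_parent {n : ℕ} : ∀ a b : FV n, (fatTree n).Adj a b →
    (b = fpar a ∧ fht b < fht a) ∨ (a = fpar b ∧ fht a < fht b) := by
  rintro a b ⟨h1 | h1, h2⟩
  · exact Or.inl ⟨h1.symm, fpar_lt h1 h2⟩
  · exact Or.inr ⟨h1.symm, fpar_lt h1 h2.symm⟩

lemma fatTree_adj_parent {n : ℕ} (a : FV n) (h : a ≠ none) : (fatTree n).Adj a (fpar a) :=
  fatTree_adj.mpr ⟨Or.inl rfl, fpar_ne a h⟩

lemma fatTree_reach_none {n : ℕ} (v : FV n) : (fatTree n).Reachable v none := by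
  match v with
  | none => exact Reachable.refl none
  | some (i, none) => exact (fatTree_adj_parent (some (i, none)) (by simp)).reachable
  | some (i, some j) =>
    exact ((fatTree_adj_parent (some (i, some j)) (by simp)).reachable).trans
      ((fatTree_adj_parent (some (i, none)) (by simp)).reachable)

lemma fatTree_connected (n : ℕ) : (fatTree n).Connected := by
  rw [connected_iff]
  exact ⟨fun u v => (fatTree_reach_none u).trans (fatTree_reach_none v).symm, ⟨none⟩⟩

lemma fatTree_isTree (n : ℕ) : (fatTree n).IsTree :=
  ⟨fatTree_connected n, acyclic_of_parent fpar fht fatTree_parent⟩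

lemma fpar_ne_leaf {n : ℕ} (u : FV n) (i j : Fin n) : fpar u ≠ some (i, some j) := by
  match u with
  | none => simp [fpar]
  | some (_, none) => simp [fpar]
  | some (_, some _) => simp [fpar]

lemma isLeaf_leaf {n : ℕ} (i j : Fin n) : IsLeaf (fatTree n) (some (i, some j)) := by
  intro u w hu hw
  have h1 : u = some (i, none) := by
    rcases hu.1 with h | h
    · exact h ▸ rfl
    · exact absurd h (fpar_ne_leaf u i j)
  have h2 : w = some (i, none) := by
    rcases hw.1 with h | h
    · exact h ▸ rfl
    · exact absurd h (fpar_ne_leaf w i j)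
  rw [h1, h2]

lemma adj_inner_leaf {n : ℕ} (i j : Fin n) :
    (fatTree n).Adj (some (i, none)) (some (i, some j)) :=
  fatTree_adj.mpr ⟨Or.inr rfl, by simp⟩

lemma adj_none_inner {n : ℕ} (i : Fin n) :
    (fatTree n).Adj (none : FV n) (some (i, none)) :=
  fatTree_adj.mpr ⟨Or.inr rfl, by simp⟩

lemma not_isLeaf_center {n : ℕ} (hn : 3 ≤ n) : ¬ IsLeaf (fatTree n) (none : FV n) := by
  intro h
  have := h (some (⟨0, by omega⟩, none)) (some (⟨1, by omega⟩, none))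
    (adj_none_inner _) (adj_none_inner _)
  simp at this

lemma not_isLeaf_inner {n : ℕ} (hn : 3 ≤ n) (i : Fin n) :
    ¬ IsLeaf (fatTree n) (some (i, none)) := by
  intro h
  have := h (some (i, some ⟨0, by omega⟩)) (some (i, some ⟨1, by omega⟩))
    (adj_inner_leaf _ _) (adj_inner_leaf _ _)
  simp at this

lemma isLeaf_iff {n : ℕ} (hn : 3 ≤ n) (v : FV n) :
    IsLeaf (fatTree n) v ↔ ∃ i j, v = some (i, some j) := by
  constructor
  · intro h
    match v with
    | none => exact absurd h (not_isLeaf_center hn)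
    | some (i, none) => exact absurd h (not_isLeaf_inner hn i)
    | some (i, some j) => exact ⟨i, j, rfl⟩
  · rintro ⟨i, j, rfl⟩
    exact isLeaf_leaf i j

lemma fatTree_dist_le {n : ℕ} (v : FV n) : (fatTree n).dist none v ≤ 2 := by
  match v with
  | none => simp [SimpleGraph.dist_self]
  | some (i, none) =>
    calc (fatTree n).dist none (some (i, none)) ≤ 1 :=
          (dist_eq_one_iff_adj.mpr (adj_none_inner i)).le
      _ ≤ 2 := by omega
  | some (i, some j) =>
    exact le_trans
      (dist_le (Walk.cons (adj_none_inner i) (Walk.cons (adj_inner_leaf i j) Walk.nil)))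
      (by simp)

lemma two_le_dist {n : ℕ} {w v : FV n} (h1 : w ≠ v) (h2 : ¬ (fatTree n).Adj w v) :
    2 ≤ (fatTree n).dist w v := by
  have hr : (fatTree n).Reachable w v := (fatTree_connected n).preconnected w v
  have h0 : (fatTree n).dist w v ≠ 0 := fun hc => h1 (hr.dist_eq_zero_iff.mp hc)
  have h1' : (fatTree n).dist w v ≠ 1 := fun hc => h2 (dist_eq_one_iff_adj.mp hc)
  omega

def fother {n : ℕ} (hn : 3 ≤ n) (i : Fin n) : Fin n :=
  if i = ⟨0, by omega⟩ then ⟨1, by omega⟩ else ⟨0, by omega⟩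

lemma fother_ne {n : ℕ} (hn : 3 ≤ n) (i : Fin n) : fother hn i ≠ i := by
  unfold fother
  split <;> simp_all <;> omega

lemma fatTree_radius_ge {n : ℕ} (hn : 3 ≤ n) (w : FV n) :
    ∃ v, 2 ≤ (fatTree n).dist w v := by
  match w with
  | none =>
    refine ⟨some (⟨0, by omega⟩, some ⟨0, by omega⟩), two_le_dist (by simp) ?_⟩
    rw [fatTree_adj]
    simp [fpar]
  | some (i, none) =>
    refine ⟨some (fother hn i, some ⟨0, by omega⟩), two_le_dist (by simp) ?_⟩
    rw [fatTree_adj]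
    simp [fpar, (fother_ne hn i)]
  | some (i, some j) =>
    refine ⟨some (fother hn i, some ⟨0, by omega⟩), two_le_dist ?_ ?_⟩
    · simp [(fother_ne hn i).symm]
    · rw [fatTree_adj]
      simp [fpar, fother_ne hn i, (fother_ne hn i).symm]

/- ======================= components of the fat tree ======================= -/

def brIdx {n : ℕ} : FV n → Option (Fin n)
  | none => none
  | some (i, _) => some i

lemma adj_brIdx {n : ℕ} {a b : FV n} (ha : a ≠ none) (hb : b ≠ none)
    (h : (fatTree n).Adj a b) : brIdx a = brIdx b := by
  rcases h.1 with h1 | h1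
  · match a with
    | none => exact absurd rfl ha
    | some (i, none) => exact absurd h1.symm hb
    | some (i, some j) => rw [← h1]; rfl
  · match b with
    | none => exact absurd rfl hb
    | some (i, none) => exact absurd h1.symm ha
    | some (i, some j) => rw [← h1]; rfl

lemma offRel_center_branch {n : ℕ} (i : Fin n) (x y : Option (Fin n)) :
    offRel (fatTree n) none (some (i, x)) (some (i, y)) := by
  refine ⟨by simp, by simp, ?_⟩
  set G' := (fatTree n).comap (Subtype.val : {v : FV n // v ≠ none} → FV n) with hG'
  have key : ∀ z : Option (Fin n),
      G'.Reachable ⟨some (i, z), by simp⟩ ⟨some (i, none), by simp⟩ := by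
    intro z
    match z with
    | none => exact Reachable.refl _
    | some j =>
      refine Adj.reachable ?_
      show (fatTree n).Adj (some (i, some j)) (some (i, none))
      exact fatTree_adj.mpr ⟨Or.inl rfl, by simp⟩
  exact (key x).trans (key y).symm

lemma offRel_center_same_branch {n : ℕ} {a b : FV n}
    (h : offRel (fatTree n) none a b) : brIdx a = brIdx b := by
  obtain ⟨ha, hb, hr⟩ := h
  exact reach_invariant (fun x : {v : FV n // v ≠ none} => brIdx x.val)
    (fun x y hxy => adj_brIdx x.2 y.2 hxy) hr

lemma reach_none_del_inner {n : ℕ} {i₀ : Fin n} {w : FV n}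
    (hw : w ≠ some (i₀, none)) (hw2 : ¬∃ j, w = some (i₀, some j)) :
    ((fatTree n).comap (Subtype.val : {v : FV n // v ≠ some (i₀, none)} → FV n)).Reachable
      ⟨w, hw⟩ ⟨none, by simp⟩ := by
  match w with
  | none => exact Reachable.refl _
  | some (i, none) =>
    refine Adj.reachable ?_
    show (fatTree n).Adj (some (i, none)) none
    exact fatTree_adj.mpr ⟨Or.inl rfl, by simp⟩
  | some (i, some j) =>
    have hii : i ≠ i₀ := fun hc => hw2 ⟨j, by rw [hc]⟩
    refine Reachable.trans (Adj.reachable (v := (⟨some (i, none), by simp [hii]⟩ :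
      {v : FV n // v ≠ some (i₀, none)})) ?_) (Adj.reachable ?_)
    · show (fatTree n).Adj (some (i, some j)) (some (i, none))
      exact fatTree_adj.mpr ⟨Or.inl rfl, by simp⟩
    · show (fatTree n).Adj (some (i, none)) none
      exact fatTree_adj.mpr ⟨Or.inl rfl, by simp⟩

lemma offRel_del_inner {n : ℕ} {i₀ : Fin n} {w u : FV n}
    (hw : w ≠ some (i₀, none)) (hw2 : ¬∃ j, w = some (i₀, some j))
    (hu : u ≠ some (i₀, none)) (hu2 : ¬∃ j, u = some (i₀, some j)) :
    offRel (fatTree n) (some (i₀, none)) w u :=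
  ⟨hw, hu, (reach_none_del_inner hw hw2).trans (reach_none_del_inner hu hu2).symm⟩

/- ======================= star lemmas (lower bound) ======================= -/

section Star
variable {V : Type*} {G : SimpleGraph V} {c : V}

lemma star_adj (hT : G.IsTree) (hd : ∀ v, G.dist c v ≤ 1) {v : V} (hv : v ≠ c) : G.Adj c v := by
  have hr : G.Reachable c v := hT.isConnected.preconnected c v
  have h0 : G.dist c v ≠ 0 := fun hc => hv (hr.dist_eq_zero_iff.mp hc).symm
  have : G.dist c v = 1 := by have := hd v; omega
  exact dist_eq_one_iff_adj.mp this

lemma star_no_edge (hT : G.IsTree) (hd : ∀ v, G.dist c v ≤ 1) {u w : V}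
    (hu : u ≠ c) (hw : w ≠ c) (hadj : G.Adj u w) : False := by
  have hp1 : (Walk.cons hadj Walk.nil : G.Walk u w).IsPath := by
    simp [Walk.isPath_def, hadj.ne]
  have hp2 : (Walk.cons (star_adj hT hd hu).symm
      (Walk.cons (star_adj hT hd hw) Walk.nil) : G.Walk u w).IsPath := by
    have : c ≠ w := fun h => hw h.symm
    simp [Walk.isPath_def, hu, hw, hadj.ne, this]
  obtain ⟨p, _, hp⟩ := hT.existsUnique_path u w
  have h1 := hp _ hp1
  have h2 := hp _ hp2
  have := congrArg Walk.length (h1.trans h2.symm)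
  simp at this

lemma star_offRel_eq (hT : G.IsTree) (hd : ∀ v, G.dist c v ≤ 1) {a b : V}
    (h : offRel G c a b) : a = b := by
  obtain ⟨ha, hb, hr⟩ := h
  exact reach_invariant (fun x : {v : V // v ≠ c} => x.val)
    (fun x y hxy => absurd hxy (fun hc => star_no_edge hT hd x.2 y.2 hc)) hr

lemma star_isLeaf (hT : G.IsTree) (hd : ∀ v, G.dist c v ≤ 1) {v : V} (hv : v ≠ c) :
    IsLeaf G v := by
  intro x y hx hy
  have hxc : x = c := by
    by_contra hxc
    exact star_no_edge hT hd hv hxc hx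
  have hyc : y = c := by
    by_contra hyc
    exact star_no_edge hT hd hv hyc hy
  rw [hxc, hyc]

end Star

def flabel {n : ℕ} (hn : 3 ≤ n) : FV n → Fin n × Fin n
  | some (i, some j) => (i, j)
  | some (i, none) => (i, i)
  | none => (⟨0, by omega⟩, ⟨0, by omega⟩)
/-- The branch-depth of the graphic matroid of the fat cycle `G_n` equals `2`. -/
theorem stmt14 (n : ℕ) (hn : 3 ≤ n) (M : Matroid (Fin n × Fin n))
    (hE : M.E = Set.univ) (hIndep : ∀ S, M.Indep S ↔ FatCycleIndep n S) :
    HasBranchDepthLE M 2 ∧ ¬ HasBranchDepthLE M 1 := by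
  constructor
  · -- upper bound : depth-2 decomposition
    refine ⟨2, 2, le_rfl, le_rfl, ⟨?_⟩⟩
    refine
      { V := FV n
        fin := inferInstance
        G := fatTree n
        tree := fatTree_isTree n
        center := none
        radius_le := fatTree_dist_le
        radius_ge := fatTree_radius_ge hn
        label := flabel hn
        label_mem := fun v _ => by rw [hE]; trivial
        label_inj := ?_
        label_surj := ?_
        conn := ?_ }
    · intro v w hv hw hvw
      obtain ⟨i, j, rfl⟩ := (isLeaf_iff hn v).mp hv
      obtain ⟨i', j', rfl⟩ := (isLeaf_iff hn w).mp hw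
      simp only [flabel, Prod.mk.injEq] at hvw
      obtain ⟨rfl, rfl⟩ := hvw
      rfl
    · intro e _
      exact ⟨some (e.1, some e.2), isLeaf_leaf _ _, rfl⟩
    · intro v hv S hS
      rcases v with - | ⟨i₀, - | j⟩
      · -- center
        have hXI : flabel hn '' {u ∈ S | IsLeaf (fatTree n) u} =
            {e : Fin n × Fin n | e.1 ∈ {i : Fin n | some (i, none) ∈ S}} := by
          ext e
          constructor
          · rintro ⟨u, ⟨huS, hul⟩, rfl⟩
            obtain ⟨i, j, rfl⟩ := (isLeaf_iff hn u).mp hul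
            exact hS.2 _ huS _ (offRel_center_branch i (some j) none)
          · intro he
            refine ⟨some (e.1, some e.2), ⟨?_, isLeaf_leaf _ _⟩, rfl⟩
            exact hS.2 _ he _ (offRel_center_branch e.1 none (some e.2))
        rw [hE, hXI]
        set I : Set (Fin n) := {i : Fin n | some (i, none) ∈ S} with hIdef
        have hA : mrank M {e : Fin n × Fin n | e.1 ∈ I} ≤ I.ncard :=
          le_trans (mrank_le_image_ncard hIndep)
            (Set.ncard_le_ncard (by rintro x ⟨e, he, rfl⟩; exact he) (Set.toFinite _))
        have hB : mrank M (Set.univ \ {e : Fin n × Fin n | e.1 ∈ I}) ≤ Iᶜ.ncard :=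
          le_trans (mrank_le_image_ncard hIndep)
            (Set.ncard_le_ncard (by rintro x ⟨e, ⟨-, he⟩, rfl⟩; exact he) (Set.toFinite _))
        have hab : I.ncard + Iᶜ.ncard ≤ n := by
          rw [Set.ncard_add_ncard_compl, Nat.card_eq_fintype_card, Fintype.card_fin]
        exact le_trans (mlambda_le_one hIndep hn hA hB hab) (by norm_num)
      · -- inner vertex of branch i₀
        rw [hE]
        by_cases hcase : ∀ u ∈ S, ∃ j, u = some (i₀, some j)
        · have hsub : Prod.fst '' (flabel hn '' {u ∈ S | IsLeaf (fatTree n) u}) ⊆ {i₀} := by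
            rintro x ⟨e, ⟨u, ⟨huS, -⟩, rfl⟩, rfl⟩
            obtain ⟨j, rfl⟩ := hcase u huS
            simp [flabel]
          have hA : mrank M (flabel hn '' {u ∈ S | IsLeaf (fatTree n) u}) ≤ 1 := by
            have := le_trans (mrank_le_image_ncard hIndep)
              (Set.ncard_le_ncard hsub (Set.toFinite _))
            simpa using this
          have hab : 1 + (n - 1) ≤ n := by omega
          exact le_trans
            (mlambda_le_one hIndep hn hA (mrank_le_n_sub_one hIndep _) hab) (by norm_num)
        · push_neg at hcase
          obtain ⟨w, hwS, hw2⟩ := hcase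
          have hwv : w ≠ some (i₀, none) := fun hc => hS.1 (hc ▸ hwS)
          have hw2' : ¬∃ j, w = some (i₀, some j) := by
            rintro ⟨j, rfl⟩
            exact hw2 j rfl
          have hleaf : ∀ e : Fin n × Fin n, e.1 ≠ i₀ → some (e.1, some e.2) ∈ S := by
            intro e hne
            refine hS.2 _ hwS _ (offRel_del_inner hwv hw2' (by simp) ?_)
            rintro ⟨j, hj⟩
            rw [Option.some.injEq, Prod.mk.injEq] at hj
            exact hne hj.1
          have hsub : Prod.fst ''
              (Set.univ \ flabel hn '' {u ∈ S | IsLeaf (fatTree n) u}) ⊆ {i₀} := by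
            rintro x ⟨e, ⟨-, heX⟩, rfl⟩
            by_contra hne
            exact heX ⟨some (e.1, some e.2), ⟨hleaf e hne, isLeaf_leaf _ _⟩, rfl⟩
          have hB : mrank M
              (Set.univ \ flabel hn '' {u ∈ S | IsLeaf (fatTree n) u}) ≤ 1 := by
            have := le_trans (mrank_le_image_ncard hIndep)
              (Set.ncard_le_ncard hsub (Set.toFinite _))
            simpa using this
          have hab : (n - 1) + 1 ≤ n := by omega
          exact le_trans
            (mlambda_le_one hIndep hn (mrank_le_n_sub_one hIndep _) hB hab) (by norm_num)
      · -- leaf : contradiction with ¬ IsLeaf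
        exact absurd (isLeaf_leaf i₀ j) hv
  · -- lower bound
    rintro ⟨d, r, hd, hr, ⟨D⟩⟩
    obtain ⟨V, fin, G, tree, c, rle, rge, label, lmem, linj, lsurj, conn⟩ := D
    haveI := fin
    have hdist : ∀ v, G.dist c v ≤ 1 := fun v => le_trans (rle v) hd
    set z : Fin n := ⟨0, by omega⟩ with hz
    set o : Fin n := ⟨1, by omega⟩ with ho
    obtain ⟨v1, hl1, hlab1⟩ := lsurj (z, z) (by rw [hE]; trivial)
    obtain ⟨v2, hl2, hlab2⟩ := lsurj (z, o) (by rw [hE]; trivial)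
    obtain ⟨v3, hl3, hlab3⟩ := lsurj (o, z) (by rw [hE]; trivial)
    have hzo : z ≠ o := by simp [hz, ho, Fin.ext_iff]
    have h12 : v1 ≠ v2 := by
      intro h
      rw [h, hlab2] at hlab1
      exact hzo (congrArg Prod.snd hlab1).symm
    have h13 : v1 ≠ v3 := by
      intro h
      rw [h, hlab3] at hlab1
      exact hzo (congrArg Prod.fst hlab1).symm
    have h23 : v2 ≠ v3 := by
      intro h
      rw [h, hlab3] at hlab2
      exact hzo (congrArg Prod.fst hlab2).symm
    have hcl : ¬ IsLeaf G c := by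
      intro hlc
      have key : ∀ x y : V, x ≠ y → x ≠ c → y ≠ c → False := fun x y hxy hx hy =>
        hxy (hlc x y (star_adj tree hdist hx) (star_adj tree hdist hy))
      by_cases h1 : v1 = c
      · exact key v2 v3 h23 (fun hc' => h12 (h1.trans hc'.symm))
          (fun hc' => h13 (h1.trans hc'.symm))
      · by_cases h2 : v2 = c
        · exact key v1 v3 h13 h1 (fun hc' => h23 (h2.trans hc'.symm))
        · exact key v1 v2 h12 h1 h2
    set S : Set V := {u | IsLeaf G u ∧ (label u).2 = z} with hSdef
    have hUP : UnionOfParts G c S := by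
      refine ⟨fun h => hcl h.1, fun a ha b hab => ?_⟩
      rwa [← star_offRel_eq tree hdist hab]
    have hXeq : label '' {u ∈ S | IsLeaf G u} = {e : Fin n × Fin n | e.2 = z} := by
      ext e
      constructor
      · rintro ⟨u, ⟨⟨-, hu2⟩, -⟩, rfl⟩
        exact hu2
      · intro he
        obtain ⟨v, hvl, rfl⟩ := lsurj e (by rw [hE]; trivial)
        exact ⟨v, ⟨⟨hvl, he⟩, hvl⟩, rfl⟩
    have hconn := conn c hcl S hUP
    rw [hXeq, hE] at hconn
    obtain ⟨hi1, hc1⟩ := diag_indep hIndep (⟨0, by omega⟩ : Fin n) z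
    have hA : n - 1 ≤ mrank M {e : Fin n × Fin n | e.2 = z} := by
      rw [← hc1]
      exact le_mrank hIndep (by rintro x ⟨a, -, rfl⟩; rfl) hi1
    obtain ⟨hi2, hc2⟩ := diag_indep hIndep (⟨0, by omega⟩ : Fin n) o
    have hB : n - 1 ≤ mrank M (Set.univ \ {e : Fin n × Fin n | e.2 = z}) := by
      rw [← hc2]
      refine le_mrank hIndep ?_ hi2
      rintro x ⟨a, -, rfl⟩
      exact ⟨trivial, hzo.symm⟩
    have hml := mlambda_ge hIndep hn hA hB
    have hr' : (r : ℤ) ≤ 1 := by exact_mod_cast hr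
    have hcast : ((n - 1 : ℕ) : ℤ) = (n : ℤ) - 1 := by omega
    have hn' : (3 : ℤ) ≤ (n : ℤ) := by exact_mod_cast hn
    linarith [hml, hconn, hr', hcast, hn']
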